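/- Let (a,b) ∈ ℝ² and consider the iteration Q_q(w) = w ×ₛ^{(1,2)} w + q on pure quaternions. If q = ai + bj lies in the xy-plane (z = 0) and c = a + bi ∈ ℂ, then for every n ≥ 1 one has Q_q^(n)(0) = ρₙ(i cos θₙ + j sin θₙ) and P_c^(n)(0) = ρₙ(cos θₙ + i sin θₙ) with the same ρₙ and θₙ, where P_c(z) = z² + c. Hence the z = 0 slice of the set M^{(1,2)} := {q pure : iterates bounded} has the same dynamics as the classical Mandelbrot set. -/

import Mathlib

open scoped Quaternion
open Bornology

noncomputable def sCoord (ρ θ φ : ℝ) : ℍ[ℝ] :=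
  ⟨0, ρ * (Real.sin φ * Real.cos θ), ρ * (Real.sin φ * Real.sin θ), ρ * Real.cos φ⟩

noncomputable def sphRho (q : ℍ[ℝ]) : ℝ := ‖q‖

noncomputable def sphTheta (q : ℍ[ℝ]) : ℝ :=
  if q.imI = 0 ∧ q.imJ = 0 then 0
  else if Complex.arg ⟨q.imI, q.imJ⟩ < 0 then Complex.arg ⟨q.imI, q.imJ⟩ + 2 * Real.pi
  else Complex.arg ⟨q.imI, q.imJ⟩

open Classical in
noncomputable def sphPhi (q : ℍ[ℝ]) : ℝ :=
  if q = 0 then 0 else Real.arccos (q.imK / ‖q‖)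

noncomputable def sprod (q₁ q₂ : ℍ[ℝ]) : ℍ[ℝ] :=
  sCoord (sphRho q₁ * sphRho q₂) (sphTheta q₁ + sphTheta q₂) (sphPhi q₁ + sphPhi q₂)

noncomputable def spow (n : ℕ) (q : ℍ[ℝ]) : ℍ[ℝ] :=
  sCoord (sphRho q ^ n) (n * sphTheta q) (n * sphPhi q)

def qmk (a b c d : ℝ) : ℍ[ℝ] := ⟨a, b, c, d⟩

/-- embedding of ℂ into the xy-plane of pure quaternions -/
noncomputable def ce (z : ℂ) : ℍ[ℝ] := qmk 0 z.re z.im 0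

lemma norm_ce (z : ℂ) : ‖ce z‖ = ‖z‖ := by
  rw [norm_eq_sqrt_real_inner, Quaternion.inner_self, Quaternion.normSq_def']
  simp [ce, qmk, Complex.norm_def, Complex.normSq_apply]
  ring_nf

lemma ce_zero : ce 0 = 0 := by
  simp only [ce, qmk, Complex.zero_re, Complex.zero_im]
  rfl

lemma ce_add (u v : ℂ) : ce (u + v) = ce u + ce v := by
  ext <;> simp [Quaternion.re_add, Quaternion.imI_add, Quaternion.imJ_add, Quaternion.imK_add] <;> simp [ce, qmk]

lemma ce_ne_zero {z : ℂ} (hz : z ≠ 0) : ce z ≠ 0 := by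
  intro h
  apply hz
  have h1 : (ce z).imI = (0 : ℍ[ℝ]).imI := by rw [h]
  have h2 : (ce z).imJ = (0 : ℍ[ℝ]).imJ := by rw [h]
  simp [ce, qmk] at h1 h2
  exact Complex.ext h1 h2

lemma step (z : ℂ) :
    sCoord (sphRho (ce z) ^ 2) (2 * sphTheta (ce z)) (sphPhi (ce z)) = ce (z ^ 2) := by
  by_cases hz : z = 0
  · subst hz
    have : sphRho (ce 0) = 0 := by simp [sphRho, ce_zero]
    rw [this]
    have : (0:ℂ)^2 = 0 := by ring
    rw [this, ce_zero]
    simp only [sCoord]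
    norm_num
    rfl
  · have habs : ‖z‖ ≠ 0 := by simpa using hz
    have hrho : sphRho (ce z) = ‖z‖ := by rw [sphRho, norm_ce]
    have hphi : sphPhi (ce z) = Real.pi / 2 := by
      rw [sphPhi, if_neg (ce_ne_zero hz)]
      simp [ce, qmk, Real.arccos_zero]
    have hmk : (⟨(ce z).imI, (ce z).imJ⟩ : ℂ) = z := by
      apply Complex.ext <;> simp [ce, qmk]
    have hcos : Real.cos (2 * sphTheta (ce z)) = Real.cos (2 * Complex.arg z) := by
      rw [sphTheta, hmk]
      split_ifs with h1 h2
      · exfalso; exact hz (Complex.ext h1.1 h1.2)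
      · rw [show (2:ℝ) * (Complex.arg z + 2 * Real.pi)
              = (2 * Complex.arg z + 2 * Real.pi) + 2 * Real.pi by ring,
            Real.cos_add_two_pi, Real.cos_add_two_pi]
      · rfl
    have hsin : Real.sin (2 * sphTheta (ce z)) = Real.sin (2 * Complex.arg z) := by
      rw [sphTheta, hmk]
      split_ifs with h1 h2
      · exfalso; exact hz (Complex.ext h1.1 h1.2)
      · rw [show (2:ℝ) * (Complex.arg z + 2 * Real.pi)
              = (2 * Complex.arg z + 2 * Real.pi) + 2 * Real.pi by ring,
            Real.sin_add_two_pi, Real.sin_add_two_pi]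
      · rfl
    have hca : Real.cos (Complex.arg z) = z.re / ‖z‖ := Complex.cos_arg hz
    have hsa : Real.sin (Complex.arg z) = z.im / ‖z‖ := Complex.sin_arg z
    have hre2 : (z ^ 2).re = z.re ^ 2 - z.im ^ 2 := by
      rw [pow_two, Complex.mul_re]; ring
    have him2 : (z ^ 2).im = 2 * (z.re * z.im) := by
      rw [pow_two, Complex.mul_im]; ring
    ext
    · rfl
    · show sphRho (ce z) ^ 2 * (Real.sin (sphPhi (ce z)) * Real.cos (2 * sphTheta (ce z)))
        = (z ^ 2).re
      rw [hrho, hphi, hcos, Real.sin_pi_div_two, one_mul, Real.cos_two_mul', hca, hsa, hre2]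
      field_simp
    · show sphRho (ce z) ^ 2 * (Real.sin (sphPhi (ce z)) * Real.sin (2 * sphTheta (ce z)))
        = (z ^ 2).im
      rw [hrho, hphi, hsin, Real.sin_pi_div_two, one_mul, Real.sin_two_mul, hca, hsa, him2]
      field_simp
    · show sphRho (ce z) ^ 2 * Real.cos (sphPhi (ce z)) = (ce (z ^ 2)).imK
      rw [hphi, Real.cos_pi_div_two, mul_zero]
      rfl

theorem bulbic_slice_dynamics (a b : ℝ) :
    (∃ ρ θ : ℕ → ℝ, ∀ n : ℕ, 1 ≤ n →
      (fun w : ℍ[ℝ] =>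
          sCoord (sphRho w ^ 2) (2 * sphTheta w) (sphPhi w) + qmk 0 a b 0)^[n] 0 =
        qmk 0 (ρ n * Real.cos (θ n)) (ρ n * Real.sin (θ n)) 0 ∧
      (fun z : ℂ => z ^ 2 + ((a : ℂ) + (b : ℂ) * Complex.I))^[n] 0 =
        (ρ n : ℂ) * ((Real.cos (θ n) : ℂ) + (Real.sin (θ n) : ℂ) * Complex.I)) ∧
    (Bornology.IsBounded
        (Set.range fun n : ℕ =>
          (fun w : ℍ[ℝ] =>
            sCoord (sphRho w ^ 2) (2 * sphTheta w) (sphPhi w) + qmk 0 a b 0)^[n] 0) ↔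
      Bornology.IsBounded
        (Set.range fun n : ℕ =>
          (fun z : ℂ => z ^ 2 + ((a : ℂ) + (b : ℂ) * Complex.I))^[n] 0)) := by
  set c : ℂ := (a : ℂ) + (b : ℂ) * Complex.I with hc
  set P : ℂ → ℂ := fun z => z ^ 2 + c with hP
  set Q : ℍ[ℝ] → ℍ[ℝ] :=
    fun w => sCoord (sphRho w ^ 2) (2 * sphTheta w) (sphPhi w) + qmk 0 a b 0 with hQ
  have hcab : ce c = qmk 0 a b 0 := by
    have : c.re = a ∧ c.im = b := by constructor <;> simp [hc]
    simp [ce, this.1, this.2]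
  have hQce : ∀ z : ℂ, Q (ce z) = ce (P z) := by
    intro z
    rw [hQ, hP]
    simp only
    rw [step z, ce_add, hcab]
  have key : ∀ n : ℕ, Q^[n] 0 = ce (P^[n] 0) := by
    intro n
    induction n with
    | zero => simp [ce_zero]
    | succ k ih =>
      rw [Function.iterate_succ_apply', Function.iterate_succ_apply', ih, hQce]
  refine ⟨⟨fun n => ‖P^[n] 0‖, fun n => Complex.arg (P^[n] 0), ?_⟩, ?_⟩
  · intro n _
    have hpolar : (↑(‖P^[n] 0‖) : ℂ) *
        ((Real.cos (Complex.arg (P^[n] 0)) : ℂ) +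
          (Real.sin (Complex.arg (P^[n] 0)) : ℂ) * Complex.I) = P^[n] 0 := by
      push_cast [Complex.ofReal_cos, Complex.ofReal_sin]
      exact Complex.norm_mul_cos_add_sin_mul_I (P^[n] 0)
    constructor
    · rw [key n]
      have hre : (P^[n] 0).re = ‖P^[n] 0‖ * Real.cos (Complex.arg (P^[n] 0)) := by
        have := congrArg Complex.re hpolar
        simpa using this.symm
      have him : (P^[n] 0).im = ‖P^[n] 0‖ * Real.sin (Complex.arg (P^[n] 0)) := by
        have := congrArg Complex.im hpolar
        simpa using this.symm
      rw [ce, hre, him]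
    · exact hpolar.symm
  · have hran : (Set.range fun n : ℕ => Q^[n] 0) =
        ce '' (Set.range fun n : ℕ => P^[n] 0) := by
      ext x
      simp only [Set.mem_range, Set.mem_image]
      constructor
      · rintro ⟨n, rfl⟩; exact ⟨P^[n] 0, ⟨n, rfl⟩, (key n).symm⟩
      · rintro ⟨z, ⟨n, rfl⟩, rfl⟩; exact ⟨n, key n⟩
    rw [hran]
    constructor
    · intro h
      rw [isBounded_iff_forall_norm_le] at h ⊢
      obtain ⟨C, hC⟩ := h
      refine ⟨C, fun z hz => ?_⟩
      have h2 := hC (ce z) ⟨z, hz, rfl⟩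
      rw [norm_ce] at h2
      simpa using h2
    · intro h
      rw [isBounded_iff_forall_norm_le] at h ⊢
      obtain ⟨C, hC⟩ := h
      refine ⟨C, ?_⟩
      rintro x ⟨z, hz, rfl⟩
      rw [norm_ce]
      have h2 := hC z hz
      simpa using h2
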